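/- arXiv:0803.0339 — 3 statements merged into one kernel-verified Lean document; each statement's English description precedes it below -/
import Mathlib

section
/- Let R be a bounded self-adjoint operator on a complex Hilbert space H whose kernel is trivial (Ru = 0 implies u = 0). Then for every u ∈ H, the vectors λ·(λ·Id + i·R)⁻¹ u converge in norm to 0 as λ → 0+. -/
open Filter

section aux
variable {H : Type*} [NormedAddCommGroup H] [InnerProductSpace ℂ H] [CompleteSpace H]

local notation "⟪" x ", " y "⟫" => @inner ℂ _ _ x y

lemma aux_lower (R : H →L[ℂ] H) (hR : IsSelfAdjoint R) (l : ℝ) (x : H) :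
    l * ‖x‖ ≤ ‖((l : ℂ) • (1 : H →L[ℂ] H) + Complex.I • R) x‖ := by
  have hr : (⟪x, R x⟫ : ℂ).im = 0 := by
    have h1 : ⟪x, R x⟫ = ⟪R x, x⟫ := (hR.isSymmetric x x).symm
    have h2 : ⟪R x, x⟫ = starRingEnd ℂ ⟪x, R x⟫ := (inner_conj_symm (R x) x).symm
    have h3 := congrArg Complex.im (h1.trans h2)
    rw [Complex.conj_im] at h3
    linarith
  have happ : ((l : ℂ) • (1 : H →L[ℂ] H) + Complex.I • R) x
      = (l : ℂ) • x + Complex.I • (R x) := by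
    simp
  have hcross : (RCLike.re (⟪(l : ℂ) • x, Complex.I • R x⟫ : ℂ) : ℝ) = 0 := by
    rw [inner_smul_left, inner_smul_right]
    simp [Complex.mul_re, hr]
  have hsq : ‖((l : ℂ) • (1 : H →L[ℂ] H) + Complex.I • R) x‖ ^ 2
      = (l * ‖x‖) ^ 2 + ‖R x‖ ^ 2 := by
    rw [happ, norm_add_sq (𝕜 := ℂ), hcross]
    have h4 : ‖(l : ℂ) • x‖ = |l| * ‖x‖ := by
      rw [norm_smul]; simp
    have h5 : ‖Complex.I • R x‖ = ‖R x‖ := by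
      rw [norm_smul]; simp
    rw [h4, h5]
    rw [mul_pow, sq_abs]
    ring
  nlinarith [norm_nonneg (((l : ℂ) • (1 : H →L[ℂ] H) + Complex.I • R) x),
    sq_nonneg (l * ‖x‖), norm_nonneg (R x), sq_nonneg (‖R x‖)]

lemma aux_unit (R : H →L[ℂ] H) (hR : IsSelfAdjoint R) (l : ℝ) (hl : 0 < l) :
    IsUnit ((l : ℂ) • (1 : H →L[ℂ] H) + Complex.I • R) := by
  have hnot : (Complex.I * (l : ℂ)) ∉ spectrum ℂ R := by
    intro h
    have := hR.mem_spectrum_eq_re h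
    have h2 := congrArg Complex.im this
    simp at h2
    linarith
  have h1 : IsUnit (algebraMap ℂ (H →L[ℂ] H) (Complex.I * (l : ℂ)) - R) :=
    spectrum.notMem_iff.mp hnot
  have h2 : IsUnit (algebraMap ℂ (H →L[ℂ] H) Complex.I) :=
    (isUnit_iff_ne_zero.mpr Complex.I_ne_zero).map (algebraMap ℂ (H →L[ℂ] H))
  have key : (l : ℂ) • (1 : H →L[ℂ] H) + Complex.I • R
      = algebraMap ℂ (H →L[ℂ] H) Complex.I *
        (R - algebraMap ℂ (H →L[ℂ] H) (Complex.I * (l : ℂ))) := by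
    ext x
    simp only [Algebra.algebraMap_eq_smul_one, ContinuousLinearMap.mul_apply,
      ContinuousLinearMap.add_apply, ContinuousLinearMap.smul_apply,
      ContinuousLinearMap.sub_apply, ContinuousLinearMap.one_apply, smul_sub, smul_smul]
    rw [show Complex.I * (Complex.I * (l : ℂ)) = -(l : ℂ) by
      rw [← mul_assoc, Complex.I_mul_I]; ring]
    module
  rw [key]
  exact h2.mul (by simpa using h1.neg)

lemma aux_bound (R : H →L[ℂ] H) (hR : IsSelfAdjoint R) (l : ℝ) (hl : 0 < l) (x : H) :
    ‖(l : ℂ) • (Ring.inverse ((l : ℂ) • (1 : H →L[ℂ] H) + Complex.I • R)) x‖ ≤ ‖x‖ := by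
  set A := (l : ℂ) • (1 : H →L[ℂ] H) + Complex.I • R with hA
  have hu := aux_unit R hR l hl
  set y := (Ring.inverse A) x with hy
  have hAy : A y = x := by
    have : (A * Ring.inverse A) x = x := by
      rw [Ring.mul_inverse_cancel A hu]; simp
    simpa [ContinuousLinearMap.mul_apply] using this
  have := aux_lower R hR l y
  rw [hAy] at this
  calc ‖(l : ℂ) • y‖ = l * ‖y‖ := by rw [norm_smul]; simp [abs_of_pos hl]
    _ ≤ ‖x‖ := this

lemma aux_range (R : H →L[ℂ] H) (hR : IsSelfAdjoint R) (l : ℝ) (hl : 0 < l) (v : H) :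
    ‖(l : ℂ) • (Ring.inverse ((l : ℂ) • (1 : H →L[ℂ] H) + Complex.I • R)) (R v)‖
      ≤ 2 * l * ‖v‖ := by
  set A := (l : ℂ) • (1 : H →L[ℂ] H) + Complex.I • R with hA
  have hu := aux_unit R hR l hl
  set B := Ring.inverse A with hB
  have hBA : ∀ z, B (A z) = z := by
    intro z
    have : (Ring.inverse A * A) z = z := by
      rw [Ring.inverse_mul_cancel A hu]; simp
    simpa [ContinuousLinearMap.mul_apply] using this
  have hRv : R v = (-Complex.I) • (A v - (l : ℂ) • v) := by
    have : A v = (l : ℂ) • v + Complex.I • (R v) := by simp [hA]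
    rw [this, add_sub_cancel_left, smul_smul]
    simp [Complex.I_mul_I]
  have hBRv : B (R v) = (-Complex.I) • (v - (l : ℂ) • (B v)) := by
    rw [hRv, map_smul, map_sub, hBA, map_smul]
  rw [hBRv]
  have : (l : ℂ) • ((-Complex.I) • (v - (l : ℂ) • (B v)))
      = (-Complex.I) • ((l : ℂ) • v - (l : ℂ) • ((l : ℂ) • (B v))) := by
    rw [smul_comm, smul_sub]
  rw [this, norm_smul]
  have h1 : ‖(l : ℂ) • v - (l : ℂ) • ((l : ℂ) • B v)‖
      ≤ ‖(l : ℂ) • v‖ + ‖(l : ℂ) • ((l : ℂ) • B v)‖ := norm_sub_le _ _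
  have h2 : ‖(l : ℂ) • v‖ = l * ‖v‖ := by rw [norm_smul]; simp [abs_of_pos hl]
  have h3 : ‖(l : ℂ) • ((l : ℂ) • B v)‖ ≤ l * ‖v‖ := by
    rw [norm_smul]
    have := aux_bound R hR l hl v
    rw [← hA, ← hB] at this
    calc ‖(l : ℂ)‖ * ‖(l : ℂ) • B v‖ = l * ‖(l : ℂ) • B v‖ := by simp [abs_of_pos hl]
      _ ≤ l * ‖v‖ := by
        apply mul_le_mul_of_nonneg_left this hl.le
  have hnI : ‖-Complex.I‖ = 1 := by simp
  rw [hnI, one_mul]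
  calc ‖(l : ℂ) • v - (l : ℂ) • ((l : ℂ) • B v)‖ ≤ l * ‖v‖ + l * ‖v‖ := by
        rw [← h2] at *; linarith
    _ = 2 * l * ‖v‖ := by ring

lemma aux_dense (R : H →L[ℂ] H) (hR : IsSelfAdjoint R)
    (hker : ∀ u : H, R u = 0 → u = 0) (u : H) (ε : ℝ) (hε : 0 < ε) :
    ∃ v : H, ‖u - R v‖ < ε := by
  set K : Submodule ℂ H := LinearMap.range (R : H →ₗ[ℂ] H) with hK
  have horth : Kᗮ = ⊥ := by
    rw [Submodule.eq_bot_iff]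
    intro x hx
    apply hker
    have h1 : ⟪R (R x), x⟫ = 0 := hx (R (R x)) ⟨R x, rfl⟩
    have h3 := hR.isSymmetric (R x) x
    simp only [ContinuousLinearMap.coe_coe] at h3
    have hRx : ⟪R x, R x⟫ = 0 := by rw [← h3]; exact h1
    exact inner_self_eq_zero.mp hRx
  have hclos : K.topologicalClosure = ⊤ := by
    rw [← Submodule.orthogonal_orthogonal_eq_closure, horth, Submodule.bot_orthogonal_eq_top]
  have hu : u ∈ closure (K : Set H) := by
    have : (K.topologicalClosure : Set H) = closure (K : Set H) := rfl
    rw [← this, hclos]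
    trivial
  rw [Metric.mem_closure_iff] at hu
  obtain ⟨w, hwK, hw⟩ := hu ε hε
  obtain ⟨v, rfl⟩ := hwK
  exact ⟨v, by simpa [dist_eq_norm] using hw⟩

end aux

/-- If `R` is a bounded self-adjoint operator with trivial kernel on a complex Hilbert space,
then for every `u`, `λ·(λ·Id + i·R)⁻¹ u → 0` in norm as `λ → 0+`. -/
theorem regularized_resolvent_tendsto_zero
    {H : Type*} [NormedAddCommGroup H] [InnerProductSpace ℂ H] [CompleteSpace H]
    (R : H →L[ℂ] H) (hR : IsSelfAdjoint R)
    (hker : ∀ u : H, R u = 0 → u = 0) (u : H) :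
    Tendsto (fun l : ℝ =>
        (l : ℂ) • (Ring.inverse ((l : ℂ) • (1 : H →L[ℂ] H) + Complex.I • R)) u)
      (nhdsWithin 0 (Set.Ioi 0)) (nhds (0 : H)) := by
  rw [NormedAddCommGroup.tendsto_nhds_zero]
  intro ε hε
  obtain ⟨v, hv⟩ := aux_dense R hR hker u (ε / 2) (by linarith)
  set δ : ℝ := ε / (4 * (‖v‖ + 1)) with hδ
  have hvpos : (0:ℝ) < ‖v‖ + 1 := by positivity
  have hδpos : 0 < δ := by positivity
  have hmem : Set.Ioo (0:ℝ) δ ∈ nhdsWithin (0:ℝ) (Set.Ioi 0) :=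
    Ioo_mem_nhdsGT_of_mem (by constructor <;> simp [hδpos])
  filter_upwards [hmem] with l hl
  obtain ⟨hl0, hlδ⟩ := hl
  set B := Ring.inverse ((l : ℂ) • (1 : H →L[ℂ] H) + Complex.I • R) with hB
  have hsplit : (l : ℂ) • B u = (l : ℂ) • B (u - R v) + (l : ℂ) • B (R v) := by
    rw [← smul_add, ← map_add, sub_add_cancel]
  rw [hsplit]
  have h1 : ‖(l : ℂ) • B (u - R v)‖ ≤ ‖u - R v‖ := aux_bound R hR l hl0 (u - R v)
  have h2 : ‖(l : ℂ) • B (R v)‖ ≤ 2 * l * ‖v‖ := aux_range R hR l hl0 v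
  have h3 : 2 * l * ‖v‖ < ε / 2 := by
    have : l * ‖v‖ < δ * (‖v‖ + 1) := by
      have hvn : ‖v‖ ≤ ‖v‖ + 1 := by linarith
      calc l * ‖v‖ ≤ l * (‖v‖ + 1) := by nlinarith [norm_nonneg v]
        _ < δ * (‖v‖ + 1) := by nlinarith
    have hδv : δ * (‖v‖ + 1) = ε / 4 := by
      rw [hδ, div_mul_eq_mul_div, div_eq_div_iff (by positivity) (by norm_num)]
      ring
    nlinarith
  calc ‖(l : ℂ) • B (u - R v) + (l : ℂ) • B (R v)‖
      ≤ ‖(l : ℂ) • B (u - R v)‖ + ‖(l : ℂ) • B (R v)‖ := norm_add_le _ _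
    _ < ε / 2 + ε / 2 := by
        have := h1.trans_lt hv
        linarith
    _ = ε := by ring
end

section
/- For h > 0, let n₂(k) = k/(tanh(k·h)·(1 + i·k)) for k ≠ 0, with n₂(0) = 1/h. Then n₂ is a bounded function on ℝ: there exists C > 0 (depending only on h) such that |n₂(k)| ≤ C for all k ∈ ℝ. -/
/-- The symbol `n₂(k) = k/(tanh(k·h)·(1 + i·k))` (with `n₂(0) = 1/h`). -/
noncomputable def n2Symbol (h : ℝ) (k : ℝ) : ℂ :=
  if k = 0 then (1 / h : ℝ)
  else (k : ℂ) / ((Real.tanh (k * h) : ℂ) * (1 + Complex.I * (k : ℂ)))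

private lemma tanh_mono' {a b : ℝ} (hab : a ≤ b) : Real.tanh a ≤ Real.tanh b := by
  rw [Real.tanh_eq_sinh_div_cosh, Real.tanh_eq_sinh_div_cosh,
    div_le_div_iff₀ (Real.cosh_pos a) (Real.cosh_pos b)]
  have h1 : 0 ≤ Real.sinh (b - a) := Real.sinh_nonneg_iff.2 (sub_nonneg.2 hab)
  rw [Real.sinh_sub] at h1
  linarith

private lemma tanh_nonneg' {a : ℝ} (ha : 0 ≤ a) : 0 ≤ Real.tanh a := by
  simpa using tanh_mono' ha

private lemma abs_tanh' (x : ℝ) : |Real.tanh x| = Real.tanh |x| := by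
  rcases le_total 0 x with hx | hx
  · rw [abs_of_nonneg (tanh_nonneg' hx), abs_of_nonneg hx]
  · rw [abs_of_nonpos, abs_of_nonpos hx, Real.tanh_neg]
    simpa [Real.tanh_neg] using tanh_nonneg' (neg_nonneg.2 hx)

private lemma self_div_cosh_le_tanh {t : ℝ} (ht : 0 ≤ t) :
    t / Real.cosh t ≤ Real.tanh t := by
  rw [Real.tanh_eq_sinh_div_cosh]
  exact div_le_div_of_nonneg_right (Real.self_le_sinh_iff.2 ht) (Real.cosh_pos t).le

/-- For `h > 0`, the symbol `n₂` is a bounded function on `ℝ`. -/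
theorem n2Symbol_bounded (h : ℝ) (hh : 0 < h) :
    ∃ C : ℝ, 0 < C ∧ ∀ k : ℝ, ‖n2Symbol h k‖ ≤ C := by
  have hth : 0 < Real.tanh h := by
    rw [Real.tanh_eq_sinh_div_cosh]
    exact div_pos (Real.sinh_pos_iff.2 hh) (Real.cosh_pos h)
  refine ⟨max (Real.cosh h / h) (1 / Real.tanh h),
    lt_max_of_lt_left (div_pos (Real.cosh_pos h) hh), fun k => ?_⟩
  by_cases hk : k = 0
  · rw [n2Symbol, if_pos hk, Complex.norm_real, Real.norm_eq_abs,
      abs_of_nonneg (by positivity)]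
    refine le_max_of_le_left ?_
    exact div_le_div_of_nonneg_right (Real.one_le_cosh h) hh.le
  · rw [n2Symbol, if_neg hk, norm_div, norm_mul, Complex.norm_real, Complex.norm_real,
      Real.norm_eq_abs, Real.norm_eq_abs]
    set A : ℝ := ‖(1 : ℂ) + Complex.I * (k : ℂ)‖ with hA
    have hAeq : A = Real.sqrt (1 + k ^ 2) := by
      have : (1 : ℂ) + Complex.I * (k : ℂ) = ((1 : ℝ) : ℂ) + (k : ℂ) * Complex.I := by
        push_cast; ring
      rw [hA, this]
      rw [Complex.norm_add_mul_I]
      norm_num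
    have hA1 : 1 ≤ A := by
      rw [hAeq]
      nlinarith [Real.sq_sqrt (show (0:ℝ) ≤ 1 + k ^ 2 by positivity),
        Real.sqrt_nonneg (1 + k ^ 2)]
    have hAk : |k| ≤ A := by
      rw [hAeq, ← Real.sqrt_sq_eq_abs]
      exact Real.sqrt_le_sqrt (by nlinarith)
    have hkpos : 0 < |k| := abs_pos.2 hk
    have htpos : 0 < |k| * h := mul_pos hkpos hh
    have hT : |Real.tanh (k * h)| = Real.tanh (|k| * h) := by
      rw [abs_tanh', abs_mul, abs_of_nonneg hh.le]
    have hTpos : 0 < Real.tanh (|k| * h) := by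
      rw [Real.tanh_eq_sinh_div_cosh]
      exact div_pos (Real.sinh_pos_iff.2 htpos) (Real.cosh_pos _)
    rw [hT]
    rcases le_total (|k|) 1 with hk1 | hk1
    · -- small k : bound by cosh h / h
      refine le_max_of_le_left ?_
      have hkh : |k| * h ≤ h := by nlinarith
      have hcosh : Real.cosh (|k| * h) ≤ Real.cosh h := by
        rw [Real.cosh_le_cosh, abs_of_nonneg htpos.le, abs_of_nonneg hh.le]
        exact hkh
      have h1 : |k| * h / Real.cosh (|k| * h) ≤ Real.tanh (|k| * h) :=
        self_div_cosh_le_tanh htpos.le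
      have hden : |k| * h / Real.cosh h ≤ Real.tanh (|k| * h) := by
        refine le_trans ?_ h1
        exact div_le_div_of_nonneg_left htpos.le (Real.cosh_pos _) hcosh
      have hdenA : |k| * h / Real.cosh h ≤ Real.tanh (|k| * h) * A := by
        calc |k| * h / Real.cosh h ≤ Real.tanh (|k| * h) := hden
          _ = Real.tanh (|k| * h) * 1 := (mul_one _).symm
          _ ≤ Real.tanh (|k| * h) * A := by
              exact mul_le_mul_of_nonneg_left hA1 hTpos.le
      rw [div_le_div_iff₀ (by positivity) hh]
      have hd2 : 0 < |k| * h / Real.cosh h := by positivity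
      calc |k| * h = (|k| * h / Real.cosh h) * Real.cosh h := by
              field_simp
        _ ≤ (Real.tanh (|k| * h) * A) * Real.cosh h :=
              mul_le_mul_of_nonneg_right hdenA (Real.cosh_pos h).le
        _ = Real.cosh h * (Real.tanh (|k| * h) * A) := by ring
    · -- large k : bound by 1 / tanh h
      refine le_max_of_le_right ?_
      have hth2 : Real.tanh h ≤ Real.tanh (|k| * h) := tanh_mono' (by nlinarith)
      rw [div_le_div_iff₀ (by positivity) hth]
      calc |k| * Real.tanh h ≤ A * Real.tanh h :=
            mul_le_mul_of_nonneg_right hAk hth.le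
        _ ≤ A * Real.tanh (|k| * h) := mul_le_mul_of_nonneg_left hth2 (by positivity)
        _ = 1 * (Real.tanh (|k| * h) * A) := by ring
end

section
/- For h > 0, let n₂(k) = k/(tanh(k·h)·(1 + i·k)) for k ≠ 0, with n₂(0) = 1/h. Then n₂ is differentiable on ℝ and its derivative n₂′ belongs to L²(ℝ; ℂ). -/
open MeasureTheory

open Complex

noncomputable def n2B (h : ℝ) : ℂ → ℂ := fun z => Complex.sinh (z * h) * (1 + Complex.I * z)

noncomputable def n2Bt (h : ℝ) : ℂ → ℂ := dslope (n2B h) 0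

lemma n2B_diff (h : ℝ) : Differentiable ℂ (n2B h) := by
  unfold n2B
  exact (Complex.differentiable_sinh.comp (differentiable_id.mul_const _)).mul
    ((differentiable_const _).add ((differentiable_const _).mul differentiable_id))

lemma n2B_zero (h : ℝ) : n2B h 0 = 0 := by simp [n2B]

lemma n2B_hasDerivAt_zero (h : ℝ) : HasDerivAt (n2B h) (h : ℂ) 0 := by
  have h1 : HasDerivAt (fun z : ℂ => Complex.sinh (z * h)) (Complex.cosh (0 * h) * h) 0 := by
    simpa [Function.comp_def] using (Complex.hasDerivAt_sinh ((0 : ℂ) * h)).comp 0 ((hasDerivAt_id (0:ℂ)).mul_const (h:ℂ))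
  have h2 : HasDerivAt (fun z : ℂ => 1 + Complex.I * z) Complex.I 0 := by
    simpa using ((hasDerivAt_id (0:ℂ)).const_mul Complex.I).const_add 1
  have := h1.mul h2
  unfold n2B
  simpa [Pi.mul_def] using this

lemma n2Bt_zero (h : ℝ) : n2Bt h 0 = (h : ℂ) := by
  rw [n2Bt, dslope_same]
  exact (n2B_hasDerivAt_zero h).deriv

lemma n2Bt_of_ne (h : ℝ) {z : ℂ} (hz : z ≠ 0) :
    n2Bt h z = Complex.sinh (z * h) * (1 + Complex.I * z) / z := by
  rw [n2Bt, dslope_of_ne _ hz, slope_def_field, n2B_zero, n2B]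
  ring

lemma n2Bt_diff (h : ℝ) : Differentiable ℂ (n2Bt h) := by
  intro z
  rcases eq_or_ne z 0 with rfl | hz
  · obtain ⟨p, hp⟩ := ((n2B_diff h).analyticAt 0)
    exact hp.has_fpower_series_dslope_fslope.analyticAt.differentiableAt
  · have : (fun w => n2B h w / w) =ᶠ[nhds z] n2Bt h := by
      filter_upwards [isOpen_ne.mem_nhds hz] with w hw
      rw [n2Bt_of_ne h hw, n2B]
    exact this.differentiableAt_iff.mp (((n2B_diff h).differentiableAt).div (differentiableAt_id) hz)

lemma one_add_I_mul_ne_zero (k : ℝ) : (1 + Complex.I * (k : ℂ)) ≠ 0 := by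
  intro H
  have := congrArg Complex.re H
  simp at this

lemma norm_one_add_I_mul (k : ℝ) : ‖1 + Complex.I * (k : ℂ)‖ = Real.sqrt (1 + k ^ 2) := by
  rw [Complex.norm_def, Complex.normSq_apply]
  norm_num [Complex.add_re, Complex.add_im, Complex.mul_re, Complex.mul_im]
  ring_nf

lemma sinh_coe_ne_zero {x : ℝ} (hx : x ≠ 0) : Complex.sinh (x : ℂ) ≠ 0 := by
  rw [← Complex.ofReal_sinh]
  exact_mod_cast Real.sinh_ne_zero.mpr hx

lemma n2Bt_ne_zero {h : ℝ} (hh : 0 < h) (k : ℝ) : n2Bt h (k : ℂ) ≠ 0 := by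
  rcases eq_or_ne k 0 with rfl | hk
  · rw [Complex.ofReal_zero, n2Bt_zero]
    exact_mod_cast hh.ne'
  · rw [n2Bt_of_ne h (by exact_mod_cast hk)]
    apply div_ne_zero (mul_ne_zero ?_ (one_add_I_mul_ne_zero k)) (by exact_mod_cast hk)
    rw [show ((k:ℂ) * h) = ((k*h : ℝ) : ℂ) by push_cast; ring]
    exact sinh_coe_ne_zero (mul_ne_zero hk hh.ne')

lemma n2Symbol_eq {h : ℝ} (hh : 0 < h) (k : ℝ) :
    n2Symbol h k = Complex.cosh ((k : ℂ) * h) / n2Bt h (k : ℂ) := by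
  rcases eq_or_ne k 0 with rfl | hk
  · simp [n2Symbol, n2Bt_zero]
  · rw [n2Symbol, if_neg hk, n2Bt_of_ne h (by exact_mod_cast hk)]
    have hc : Complex.cosh ((k:ℂ) * h) ≠ 0 := by
      rw [show ((k:ℂ) * h) = ((k*h : ℝ) : ℂ) by push_cast; ring, ← Complex.ofReal_cosh]
      exact_mod_cast (Real.cosh_pos (x := k*h)).ne'
    have hs : Complex.sinh ((k:ℂ) * h) ≠ 0 := by
      rw [show ((k:ℂ) * h) = ((k*h : ℝ) : ℂ) by push_cast; ring]
      exact sinh_coe_ne_zero (mul_ne_zero hk hh.ne')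
    have ht : (Real.tanh (k * h) : ℂ) = Complex.sinh ((k:ℂ)*h) / Complex.cosh ((k:ℂ)*h) := by
      rw [Complex.ofReal_tanh, Complex.tanh_eq_sinh_div_cosh]
      push_cast; ring_nf
    rw [ht]
    have hk' : (k : ℂ) ≠ 0 := by exact_mod_cast hk
    field_simp

noncomputable def n2D (h : ℝ) : ℝ → ℂ := fun k =>
  (Complex.sinh ((k:ℂ) * h) * h * n2Bt h (k:ℂ) -
      Complex.cosh ((k:ℂ) * h) * deriv (n2Bt h) (k:ℂ)) / (n2Bt h (k:ℂ)) ^ 2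

lemma n2_hasDerivAt {h : ℝ} (hh : 0 < h) (k : ℝ) :
    HasDerivAt (n2Symbol h) (n2D h k) k := by
  have hnum : HasDerivAt (fun x : ℝ => Complex.cosh ((x:ℂ) * h))
      (Complex.sinh ((k:ℂ) * h) * h) k := by
    have : HasDerivAt (fun z : ℂ => Complex.cosh (z * h)) (Complex.sinh ((k:ℂ) * h) * h) (k:ℂ) := by
      simpa [Function.comp_def] using (Complex.hasDerivAt_cosh ((k:ℂ) * h)).comp (k:ℂ)
        ((hasDerivAt_id ((k:ℂ))).mul_const (h:ℂ))
    exact this.comp_ofReal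
  have hden : HasDerivAt (fun x : ℝ => n2Bt h (x:ℂ)) (deriv (n2Bt h) (k:ℂ)) k :=
    ((n2Bt_diff h (k:ℂ)).hasDerivAt).comp_ofReal
  have := hnum.div hden (n2Bt_ne_zero hh k)
  have heq : n2Symbol h = fun x : ℝ => Complex.cosh ((x:ℂ) * h) / n2Bt h (x:ℂ) :=
    funext (n2Symbol_eq hh)
  rw [heq]
  exact this

lemma n2_differentiable {h : ℝ} (hh : 0 < h) : Differentiable ℝ (n2Symbol h) :=
  fun k => (n2_hasDerivAt hh k).differentiableAt

lemma n2_deriv_eq {h : ℝ} (hh : 0 < h) : deriv (n2Symbol h) = n2D h :=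
  funext fun k => (n2_hasDerivAt hh k).deriv

lemma n2D_continuous {h : ℝ} (hh : 0 < h) : Continuous (n2D h) := by
  have hBt : Continuous fun k : ℝ => n2Bt h (k:ℂ) :=
    (n2Bt_diff h).continuous.comp Complex.continuous_ofReal
  have hBt' : Continuous fun k : ℝ => deriv (n2Bt h) (k:ℂ) := by
    have : Differentiable ℂ (deriv (n2Bt h)) := by
      rw [← analyticOnNhd_univ_iff_differentiable] at *
      exact (analyticOnNhd_univ_iff_differentiable.mpr (n2Bt_diff h)).deriv
    exact this.continuous.comp Complex.continuous_ofReal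
  have hsinh : Continuous fun k : ℝ => Complex.sinh ((k:ℂ) * h) :=
    Complex.continuous_sinh.comp ((Complex.continuous_ofReal).mul continuous_const)
  have hcosh : Continuous fun k : ℝ => Complex.cosh ((k:ℂ) * h) :=
    Complex.continuous_cosh.comp ((Complex.continuous_ofReal).mul continuous_const)
  exact (((hsinh.mul continuous_const).mul hBt).sub (hcosh.mul hBt')).div (hBt.pow 2)
    fun k => pow_ne_zero 2 (n2Bt_ne_zero hh k)

noncomputable def n2E (h : ℝ) : ℝ → ℂ := fun k =>
  -(h:ℂ) / (Complex.sinh ((k:ℂ) * h)) ^ 2 * ((k:ℂ) / (1 + Complex.I * k)) +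
    (Complex.cosh ((k:ℂ) * h) / Complex.sinh ((k:ℂ) * h)) * (1 / (1 + Complex.I * k) ^ 2)

lemma n2_deriv_eq_E {h : ℝ} (hh : 0 < h) {k : ℝ} (hk : k ≠ 0) :
    deriv (n2Symbol h) k = n2E h k := by
  have hs : Complex.sinh ((k:ℂ) * h) ≠ 0 := by
    rw [show ((k:ℂ) * h) = ((k*h : ℝ) : ℂ) by push_cast; ring]
    exact sinh_coe_ne_zero (mul_ne_zero hk hh.ne')
  have hc : Complex.cosh ((k:ℂ) * h) ≠ 0 := by
    rw [show ((k:ℂ) * h) = ((k*h : ℝ) : ℂ) by push_cast; ring, ← Complex.ofReal_cosh]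
    exact_mod_cast (Real.cosh_pos (x := k*h)).ne'
  have h1k : (1 + Complex.I * (k:ℂ)) ≠ 0 := one_add_I_mul_ne_zero k
  -- derivative of p x = cosh(xh)/sinh(xh)
  have hnum : HasDerivAt (fun x : ℝ => Complex.cosh ((x:ℂ) * h))
      (Complex.sinh ((k:ℂ) * h) * h) k := by
    have : HasDerivAt (fun z : ℂ => Complex.cosh (z * h)) (Complex.sinh ((k:ℂ) * h) * h) (k:ℂ) := by
      simpa [Function.comp_def] using (Complex.hasDerivAt_cosh ((k:ℂ) * h)).comp (k:ℂ)
        ((hasDerivAt_id ((k:ℂ))).mul_const (h:ℂ))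
    exact this.comp_ofReal
  have hden : HasDerivAt (fun x : ℝ => Complex.sinh ((x:ℂ) * h))
      (Complex.cosh ((k:ℂ) * h) * h) k := by
    have : HasDerivAt (fun z : ℂ => Complex.sinh (z * h)) (Complex.cosh ((k:ℂ) * h) * h) (k:ℂ) := by
      simpa [Function.comp_def] using (Complex.hasDerivAt_sinh ((k:ℂ) * h)).comp (k:ℂ)
        ((hasDerivAt_id ((k:ℂ))).mul_const (h:ℂ))
    exact this.comp_ofReal
  have hp := hnum.div hden hs
  -- derivative of q x = x/(1+Ix)
  have hu : HasDerivAt (fun x : ℝ => ((x:ℂ))) 1 k := (hasDerivAt_id ((k:ℂ))).comp_ofReal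
  have hv : HasDerivAt (fun x : ℝ => 1 + Complex.I * (x:ℂ)) Complex.I k := by
    have : HasDerivAt (fun z : ℂ => 1 + Complex.I * z) Complex.I (k:ℂ) := by
      simpa using ((hasDerivAt_id ((k:ℂ))).const_mul Complex.I).const_add 1
    exact this.comp_ofReal
  have hq := hu.div hv h1k
  have hP := hp.mul hq
  have heq : (fun x : ℝ => Complex.cosh ((x:ℂ) * h) / Complex.sinh ((x:ℂ) * h) *
      ((x:ℂ) / (1 + Complex.I * x))) =ᶠ[nhds k] n2Symbol h := by
    filter_upwards [isOpen_ne.mem_nhds hk] with x hx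
    have hsx : Complex.sinh ((x:ℂ) * h) ≠ 0 := by
      rw [show ((x:ℂ) * h) = ((x*h : ℝ) : ℂ) by push_cast; ring]
      exact sinh_coe_ne_zero (mul_ne_zero hx hh.ne')
    have hcx : Complex.cosh ((x:ℂ) * h) ≠ 0 := by
      rw [show ((x:ℂ) * h) = ((x*h : ℝ) : ℂ) by push_cast; ring, ← Complex.ofReal_cosh]
      exact_mod_cast (Real.cosh_pos (x := x*h)).ne'
    have ht : (Real.tanh (x * h) : ℂ) = Complex.sinh ((x:ℂ)*h) / Complex.cosh ((x:ℂ)*h) := by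
      rw [Complex.ofReal_tanh, Complex.tanh_eq_sinh_div_cosh]
      push_cast; ring_nf
    rw [n2Symbol, if_neg hx, ht]
    field_simp
  have hD := hP.congr_of_eventuallyEq heq.symm
  rw [hD.deriv, n2E]
  simp only [Pi.div_apply]
  have hid : Complex.cosh ((k:ℂ)*h) ^ 2 - Complex.sinh ((k:ℂ)*h) ^ 2 = 1 :=
    Complex.cosh_sq_sub_sinh_sq _
  rw [show Complex.sinh ((k:ℂ) * h) * h * Complex.sinh ((k:ℂ) * h) -
      Complex.cosh ((k:ℂ) * h) * (Complex.cosh ((k:ℂ) * h) * h) = -(h:ℂ) by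
      linear_combination (-(h:ℂ)) * hid,
    show (1 * (1 + Complex.I * (k:ℂ)) - (k:ℂ) * Complex.I) = 1 by ring]

lemma sq_le_sinh_sq (x : ℝ) : x ^ 2 ≤ Real.sinh x ^ 2 := by
  have h1 : |x| ≤ |Real.sinh x| := by
    rw [Real.abs_sinh]
    exact Real.self_le_sinh_iff.mpr (abs_nonneg x)
  calc x ^ 2 = |x| ^ 2 := (_root_.sq_abs x).symm
    _ ≤ |Real.sinh x| ^ 2 := by gcongr <;> positivity
    _ = Real.sinh x ^ 2 := _root_.sq_abs _

lemma coth_le_coth {h x : ℝ} (hh : 0 < h) (hx : h ≤ x) :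
    Real.cosh x / Real.sinh x ≤ Real.cosh h / Real.sinh h := by
  rw [div_le_div_iff₀ (Real.sinh_pos_iff.mpr (hh.trans_le hx)) (Real.sinh_pos_iff.mpr hh)]
  have h1 : 0 ≤ Real.sinh (x - h) := Real.sinh_nonneg_iff.mpr (by linarith)
  have h2 := Real.sinh_sub x h
  linarith

lemma n2E_bound {h : ℝ} (hh : 0 < h) {k : ℝ} (hk : 1 ≤ |k|) :
    ‖n2E h k‖ ≤ (2 / h + Real.cosh h / Real.sinh h) / (1 + k ^ 2) := by
  have hk0 : k ≠ 0 := by intro H; rw [H] at hk; norm_num at hk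
  have hcoe : ((k:ℂ) * h) = ((k * h : ℝ) : ℂ) := by push_cast; ring
  have hs0 : Real.sinh (k * h) ≠ 0 := Real.sinh_ne_zero.mpr (mul_ne_zero hk0 hh.ne')
  have hsqrt1 : (1:ℝ) ≤ Real.sqrt (1 + k ^ 2) := by
    have := Real.sqrt_le_sqrt (show (1:ℝ) ≤ 1 + k ^ 2 by nlinarith)
    rwa [Real.sqrt_one] at this
  have hsqrtk : |k| ≤ Real.sqrt (1 + k ^ 2) := by
    have := Real.sqrt_le_sqrt (show k ^ 2 ≤ 1 + k ^ 2 by nlinarith)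
    rwa [Real.sqrt_sq_eq_abs] at this
  have hnorm1 : ‖(1 + Complex.I * (k:ℂ))‖ = Real.sqrt (1 + k ^ 2) := norm_one_add_I_mul k
  have ht1 : ‖-(h:ℂ) / (Complex.sinh ((k:ℂ) * h)) ^ 2 * ((k:ℂ) / (1 + Complex.I * k))‖
      = h / Real.sinh (k * h) ^ 2 * (|k| / Real.sqrt (1 + k ^ 2)) := by
    rw [hcoe, ← Complex.ofReal_sinh]
    simp only [norm_mul, norm_div, norm_neg, norm_pow, Complex.norm_real,
      Real.norm_eq_abs, hnorm1]
    rw [abs_of_pos hh, _root_.sq_abs]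
  have ht2 : ‖(Complex.cosh ((k:ℂ) * h) / Complex.sinh ((k:ℂ) * h)) *
      (1 / (1 + Complex.I * k) ^ 2)‖
      = Real.cosh (k * h) / |Real.sinh (k * h)| * (1 / (1 + k ^ 2)) := by
    rw [hcoe, ← Complex.ofReal_sinh, ← Complex.ofReal_cosh]
    simp only [norm_mul, norm_div, norm_pow, Complex.norm_real, Real.norm_eq_abs,
      hnorm1, norm_one]
    rw [abs_of_pos (Real.cosh_pos (x := k * h)), Real.sq_sqrt (by positivity : (0:ℝ) ≤ 1 + k ^ 2)]
  calc ‖n2E h k‖ ≤ h / Real.sinh (k * h) ^ 2 * (|k| / Real.sqrt (1 + k ^ 2)) +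
        Real.cosh (k * h) / |Real.sinh (k * h)| * (1 / (1 + k ^ 2)) := by
        rw [n2E, ← ht1, ← ht2]; exact norm_add_le _ _
    _ ≤ (2 / h) / (1 + k ^ 2) + (Real.cosh h / Real.sinh h) * (1 / (1 + k ^ 2)) := by
        gcongr ?_ + ?_
        · -- first term
          have f1 : (k * h) ^ 2 ≤ Real.sinh (k * h) ^ 2 := sq_le_sinh_sq _
          have hkh : 0 < (k * h) ^ 2 := by positivity
          have step1 : |k| / Real.sqrt (1 + k ^ 2) ≤ 1 :=
            (div_le_one (by linarith)).mpr hsqrtk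
          have step2 : h / Real.sinh (k * h) ^ 2 ≤ h / (k * h) ^ 2 :=
            div_le_div_of_nonneg_left hh.le hkh f1
          have step3 : h / Real.sinh (k * h) ^ 2 * (|k| / Real.sqrt (1 + k ^ 2))
              ≤ h / (k * h) ^ 2 := by
            calc h / Real.sinh (k * h) ^ 2 * (|k| / Real.sqrt (1 + k ^ 2))
                ≤ h / (k * h) ^ 2 * 1 := by
                  apply mul_le_mul step2 step1 (by positivity) (by positivity)
              _ = h / (k * h) ^ 2 := mul_one _
          refine step3.trans ?_
          have hk2 : 1 ≤ k ^ 2 := by nlinarith [_root_.sq_abs k]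
          rw [show h / (k * h) ^ 2 = 1 / (h * k ^ 2) by field_simp,
            show 2 / h / (1 + k ^ 2) = 2 / (h * (1 + k ^ 2)) by field_simp]
          rw [div_le_div_iff₀ (by positivity) (by positivity)]
          nlinarith [mul_pos hh (mul_pos hh (show (0:ℝ) < k ^ 2 by nlinarith))]
        · -- second term
          have : Real.cosh (k * h) / |Real.sinh (k * h)| =
              Real.cosh (|k| * h) / Real.sinh (|k| * h) := by
            rw [Real.abs_sinh, ← Real.cosh_abs, abs_mul, abs_of_pos hh]
          rw [this]
          exact mul_le_mul_of_nonneg_right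
            (coth_le_coth hh (le_mul_of_one_le_left hh.le hk)) (by positivity)
    _ = (2 / h + Real.cosh h / Real.sinh h) / (1 + k ^ 2) := by ring

/-- For `h > 0`, the symbol `n₂` is differentiable on `ℝ` and its derivative is
square-integrable. -/
theorem n2Symbol_deriv_memL2 (h : ℝ) (hh : 0 < h) :
    Differentiable ℝ (n2Symbol h) ∧
      MemLp (deriv (n2Symbol h)) 2 (volume : Measure ℝ) := by
  refine ⟨n2_differentiable hh, ?_⟩
  -- bound on the compact part
  obtain ⟨M, hM⟩ := isCompact_Icc.exists_bound_of_continuousOn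
    (s := Set.Icc (-1:ℝ) 1) ((n2D_continuous hh).continuousOn)
  have hM0 : 0 ≤ M := le_trans (norm_nonneg _) (hM 0 (by norm_num))
  set C : ℝ := max (2 / h + Real.cosh h / Real.sinh h) (2 * M) with hC
  have hC0 : 0 ≤ C := le_trans (by linarith) (le_max_right _ _)
  -- global bound
  have hbound : ∀ k : ℝ, ‖deriv (n2Symbol h) k‖ ≤ C / (1 + k ^ 2) := by
    intro k
    rcases le_or_gt 1 |k| with hk | hk
    · rw [n2_deriv_eq_E hh (by intro H; rw [H] at hk; norm_num at hk)]
      refine (n2E_bound hh hk).trans ?_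
      gcongr
      exact le_max_left _ _
    · have hk' : k ∈ Set.Icc (-1:ℝ) 1 := by
        constructor <;> [linarith [neg_abs_le k]; linarith [le_abs_self k]]
      rw [n2_deriv_eq hh]
      refine (hM k hk').trans ?_
      have h2 : 1 + k ^ 2 ≤ 2 := by nlinarith [abs_nonneg k, _root_.sq_abs k]
      rw [le_div_iff₀ (by positivity)]
      calc M * (1 + k ^ 2) ≤ M * 2 := by nlinarith
        _ ≤ C := by rw [hC]; linarith [le_max_right (2 / h + Real.cosh h / Real.sinh h) (2 * M)]
  -- the dominating function is in L²
  have hgmeas : AEStronglyMeasurable (fun k : ℝ => C / (1 + k ^ 2)) volume :=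
    (continuous_const.div (by continuity) (fun k => by positivity)).aestronglyMeasurable
  have hgL2 : MemLp (fun k : ℝ => C / (1 + k ^ 2)) 2 (volume : Measure ℝ) := by
    rw [memLp_two_iff_integrable_sq hgmeas]
    have hint : Integrable (fun k : ℝ => C ^ 2 * (1 + k ^ 2)⁻¹) volume :=
      integrable_inv_one_add_sq.const_mul _
    refine hint.mono' ?_ ?_
    · exact ((continuous_const.div (by continuity) (fun k : ℝ => by positivity)).pow 2).aestronglyMeasurable
    · refine Filter.Eventually.of_forall fun k => ?_
      have h1 : (0:ℝ) < 1 + k ^ 2 := by positivity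
      rw [Real.norm_eq_abs, _root_.abs_of_nonneg (by positivity), div_pow]
      rw [← div_eq_mul_inv]
      exact div_le_div_of_nonneg_left (sq_nonneg C) h1 (by nlinarith)
  -- conclude
  refine hgL2.of_le ?_ ?_
  · rw [n2_deriv_eq hh]
    exact (n2D_continuous hh).aestronglyMeasurable
  · refine Filter.Eventually.of_forall fun k => ?_
    exact (hbound k).trans ((le_abs_self _).trans_eq (Real.norm_eq_abs _).symm)
end
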